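/- Let {α_i mod I_i}_{i=1}^k be a collection of cosets in O_K with I = ∩_i I_i = ∏_{j=1}^l 𝔭_j^{r_j}, and let f be the bijection from O_K/I to the parallelotope P(n; b) (n = Σ_j r_j, b the vector repeating N(𝔭_j) exactly r_j times) given by 𝔭_j-adic digit expansions of CRT components. Then for each i, the image under f of the set of classes mod I contained in α_i + I_i is a cell of P(n;b), and {α_i mod I_i} is an exact covering system if and only if these images form a cell partition of P(n;b); moreover I_i ∣ I_t if and only if I(f(α_i mod I_i)) ⊇ I(f(α_t mod I_t)). -/

import Mathlib

open NumberField

set_option synthInstance.maxHeartbeats 1000000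
set_option maxHeartbeats 1000000

section BFFAux

variable {R : Type*} [CommRing R] [IsDedekindDomain R]

-- L1: primary property
lemma BFF.mem_pow_of_mul_mem {p : Ideal R} (hp : p.IsPrime) (hp0 : p ≠ ⊥)
    {a b : R} (ha : a ∉ p) {n : ℕ} (h : a * b ∈ p ^ n) : b ∈ p ^ n := by
  have hpr : Prime p := Ideal.prime_of_isPrime hp0 hp
  rw [← Ideal.dvd_span_singleton] at h ⊢
  rw [← Ideal.span_singleton_mul_span_singleton] at h
  exact hpr.pow_dvd_of_dvd_mul_left n (by rwa [Ideal.dvd_span_singleton]) h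

-- L2: uniformizer powers
lemma BFF.pow_not_mem {p : Ideal R} (hp : p.IsPrime) (hp0 : p ≠ ⊥)
    {t : R} (ht : t ∈ p) (ht2 : t ∉ p ^ 2) (s : ℕ) : t ^ s ∉ p ^ (s + 1) := by
  intro hmem
  have hpr : Prime p := Ideal.prime_of_isPrime hp0 hp
  rw [← Ideal.dvd_span_singleton, ← Ideal.span_singleton_pow] at hmem
  have h1 : p ∣ Ideal.span {t} := Ideal.dvd_span_singleton.mpr ht
  obtain ⟨J, hJ⟩ := h1
  have h2 : ¬ p ∣ J := by
    intro hdvd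
    apply ht2
    rw [← Ideal.dvd_span_singleton, hJ, pow_two]
    exact mul_dvd_mul_left p hdvd
  rw [hJ, mul_pow] at hmem
  have h3 : p ^ (s + 1) ∣ p ^ s * J ^ s := hmem
  have h4 : p ∣ J ^ s := by
    have hcancel : p ^ s ≠ 0 := pow_ne_zero _ hpr.ne_zero
    obtain ⟨C, hC⟩ := h3
    rw [pow_succ', mul_assoc, mul_left_comm] at hC
    have := mul_left_cancel₀ hcancel hC
    exact ⟨C, this⟩
  exact h2 (hpr.dvd_of_dvd_pow h4)

open Finset in
-- pairwise coprimality of powers of distinct primes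
lemma BFF.coprime_pow_pow {p q : Ideal R} (hp : p.IsPrime) (hq : q.IsPrime)
    (hp0 : p ≠ ⊥) (hq0 : q ≠ ⊥) (hne : p ≠ q) (m n : ℕ) :
    p ^ m ⊔ q ^ n = ⊤ := by
  have hpm : p.IsMaximal := hp.isMaximal hp0
  have hqm : q.IsMaximal := hq.isMaximal hq0
  exact Ideal.pow_sup_pow_eq_top (hpm.coprime_of_ne hqm hne)

open Finset in
-- L5: membership in a product of powers of distinct primes
lemma BFF.mem_prod_iff {l : ℕ} (𝔭 : Fin l → Ideal R) (hprime : ∀ j, (𝔭 j).IsPrime)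
    (hpbot : ∀ j, 𝔭 j ≠ ⊥) (hpinj : Function.Injective 𝔭) (s : Fin l → ℕ)
    (F : Finset (Fin l)) (x : R) :
    x ∈ ∏ j ∈ F, 𝔭 j ^ s j ↔ ∀ j ∈ F, x ∈ 𝔭 j ^ s j := by
  classical
  induction F using Finset.induction with
  | empty => simp [Ideal.one_eq_top]
  | @insert a F ha ih =>
    rw [Finset.prod_insert ha]
    have hcop : 𝔭 a ^ s a ⊔ ∏ j ∈ F, 𝔭 j ^ s j = ⊤ := by
      apply Ideal.sup_prod_eq_top
      intro j hj
      exact BFF.coprime_pow_pow (hprime a) (hprime j) (hpbot a) (hpbot j)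
        (fun h => ha (hpinj h ▸ hj)) _ _
    rw [Ideal.mul_eq_inf_of_coprime hcop]
    simp only [Ideal.mem_inf, ih, Finset.mem_insert]
    constructor
    · rintro ⟨h1, h2⟩ j (rfl | hj)
      · exact h1
      · exact h2 j hj
    · intro h
      exact ⟨h a (Or.inl rfl), fun j hj => h j (Or.inr hj)⟩

-- divisor of prime power
lemma BFF.eq_pow_of_dvd_pow {p : Ideal R} (hp : p.IsPrime) (hp0 : p ≠ ⊥)
    {J : Ideal R} {n : ℕ} (h : J ∣ p ^ n) : ∃ m ≤ n, J = p ^ m := by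
  have hpr : Prime p := Ideal.prime_of_isPrime hp0 hp
  obtain ⟨m, hm, hass⟩ := (dvd_prime_pow hpr n).mp h
  exact ⟨m, hm, associated_iff_eq.mp hass⟩

open Finset in
-- L6: divisors of products of prime powers
lemma BFF.dvd_prod_pow {l : ℕ} (𝔭 : Fin l → Ideal R) (hprime : ∀ j, (𝔭 j).IsPrime)
    (hpbot : ∀ j, 𝔭 j ≠ ⊥) (hpinj : Function.Injective 𝔭) (r : Fin l → ℕ)
    (F : Finset (Fin l)) (J : Ideal R) (h : J ∣ ∏ j ∈ F, 𝔭 j ^ r j) :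
    ∃ s : Fin l → ℕ, (∀ j, s j ≤ r j) ∧ J = ∏ j ∈ F, 𝔭 j ^ s j := by
  classical
  induction F using Finset.induction generalizing J with
  | empty =>
    refine ⟨fun _ => 0, fun j => Nat.zero_le _, ?_⟩
    simp only [Finset.prod_empty] at h ⊢
    rw [Ideal.one_eq_top]
    exact Ideal.isUnit_iff.mp (isUnit_of_dvd_one h)
  | @insert a F ha ih =>
    rw [Finset.prod_insert ha] at h
    set X := 𝔭 a ^ r a with hX
    set Y := ∏ j ∈ F, 𝔭 j ^ r j with hY
    have hXY : X ⊔ Y = ⊤ := by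
      apply Ideal.sup_prod_eq_top
      intro j hj
      exact BFF.coprime_pow_pow (hprime a) (hprime j) (hpbot a) (hpbot j)
        (fun hh => ha (hpinj hh ▸ hj)) _ _
    have hJle : X * Y ≤ J := Ideal.le_of_dvd h
    have hcop : (J ⊔ X) ⊔ (J ⊔ Y) = ⊤ := by
      rw [sup_sup_sup_comm, sup_idem]
      exact top_le_iff.mp (hXY ▸ le_sup_right)
    have hsplit : J = (J ⊔ X) * (J ⊔ Y) := by
      apply le_antisymm
      · rw [Ideal.mul_eq_inf_of_coprime hcop]
        exact le_inf le_sup_left le_sup_left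
      · calc (J ⊔ X) * (J ⊔ Y) ≤ J ⊔ X * Y := by
              rw [Ideal.sup_mul, Ideal.mul_sup, Ideal.mul_sup]
              refine sup_le (sup_le ?_ ?_) (sup_le ?_ le_sup_right)
              · exact le_sup_left.trans' (Ideal.mul_le_left)
              · exact le_sup_left.trans' (Ideal.mul_le_left)
              · exact le_sup_left.trans' (Ideal.mul_le_right)
        _ = J := by rw [sup_eq_left]; exact hJle
    obtain ⟨sa, hsa, hA⟩ := BFF.eq_pow_of_dvd_pow (hprime a) (hpbot a)
      (J := J ⊔ X) (n := r a) (Ideal.dvd_iff_le.mpr le_sup_right)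
    obtain ⟨s', hs', hB⟩ := ih (J ⊔ Y) (Ideal.dvd_iff_le.mpr le_sup_right)
    refine ⟨Function.update s' a sa, ?_, ?_⟩
    · intro j
      rcases eq_or_ne j a with rfl | hja
      · simpa using hsa
      · simpa [Function.update_of_ne hja] using hs' j
    · rw [Finset.prod_insert ha, Function.update_self]
      rw [Finset.prod_congr rfl (fun j hj => by
        rw [Function.update_of_ne (ne_of_mem_of_not_mem hj ha)])]
      rw [← hA, ← hB, ← hsplit]

open Finset in
lemma BFF.le_exponent {l : ℕ} (𝔭 : Fin l → Ideal R) (hprime : ∀ j, (𝔭 j).IsPrime)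
    (hpbot : ∀ j, 𝔭 j ≠ ⊥) (hpinj : Function.Injective 𝔭) (a b : Fin l → ℕ)
    (h : (∏ j, 𝔭 j ^ b j) ≤ ∏ j, 𝔭 j ^ a j) (j0 : Fin l)
    {t : R} (ht : t ∈ 𝔭 j0) (ht2 : t ∉ 𝔭 j0 ^ 2) : a j0 ≤ b j0 := by
  classical
  by_contra hab
  push_neg at hab
  -- find c ∈ ∏_{j ≠ j0} 𝔭 j ^ b j with c ∉ 𝔭 j0
  have hsup : 𝔭 j0 ⊔ ∏ j ∈ Finset.univ.erase j0, 𝔭 j ^ b j = ⊤ := by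
    apply Ideal.sup_prod_eq_top
    intro j hj
    have := BFF.coprime_pow_pow (hprime j0) (hprime j) (hpbot j0) (hpbot j)
      (fun hh => (Finset.mem_erase.mp hj).1 (hpinj hh).symm) 1 (b j)
    rwa [pow_one] at this
  have h1 : (1 : R) ∈ 𝔭 j0 ⊔ ∏ j ∈ Finset.univ.erase j0, 𝔭 j ^ b j := by
    rw [hsup]; exact Submodule.mem_top
  obtain ⟨u, hu, c, hc, huc⟩ := Submodule.mem_sup.mp h1
  have hcne : c ∉ 𝔭 j0 := by
    intro hcp
    have : (1 : R) ∈ 𝔭 j0 := huc ▸ add_mem hu hcp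
    exact (hprime j0).ne_top (Ideal.eq_top_of_isUnit_mem _ this isUnit_one)
  -- x := t ^ b j0 * c lies in every 𝔭 j ^ b j
  have hxmem : t ^ b j0 * c ∈ ∏ j, 𝔭 j ^ b j := by
    rw [BFF.mem_prod_iff 𝔭 hprime hpbot hpinj b]
    intro j _
    rcases eq_or_ne j j0 with rfl | hne
    · exact Ideal.mul_mem_right _ _ (Ideal.pow_mem_pow ht _)
    · have : c ∈ 𝔭 j ^ b j := by
        have := (BFF.mem_prod_iff 𝔭 hprime hpbot hpinj b (Finset.univ.erase j0) c).mp hc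
        exact this j (Finset.mem_erase.mpr ⟨hne, Finset.mem_univ j⟩)
      exact Ideal.mul_mem_left _ _ this
  have hxa : t ^ b j0 * c ∈ 𝔭 j0 ^ a j0 := by
    have := h hxmem
    exact (BFF.mem_prod_iff 𝔭 hprime hpbot hpinj a Finset.univ _).mp this j0 (Finset.mem_univ j0)
  have hxs : t ^ b j0 * c ∈ 𝔭 j0 ^ (b j0 + 1) :=
    Ideal.pow_le_pow_right hab hxa
  have : t ^ b j0 ∈ 𝔭 j0 ^ (b j0 + 1) := by
    apply BFF.mem_pow_of_mul_mem (hprime j0) (hpbot j0) hcne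
    rwa [mul_comm] at hxs
  exact BFF.pow_not_mem (hprime j0) (hpbot j0) ht ht2 (b j0) this

-- digit uniqueness mod p
lemma BFF.e_inj {p : Ideal R} {N : ℕ} {e : Fin N → R}
    (he : ∀ x : R, ∃! m : Fin N, x - e m ∈ p) {m m' : Fin N}
    (h : e m - e m' ∈ p) : m = m' := by
  obtain ⟨m'', _, hu⟩ := he (e m)
  have h1 : m = m'' := hu m (by simpa using (zero_mem p))
  have h2 : m' = m'' := hu m' h
  rw [h1, h2]

lemma BFF.digits_agree_iff {p : Ideal R} (hp : p.IsPrime) (hp0 : p ≠ ⊥)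
    {t : R} (ht : t ∈ p) (ht2 : t ∉ p ^ 2) {N : ℕ} {e : Fin N → R}
    (he : ∀ x : R, ∃! m : Fin N, x - e m ∈ p) {r : ℕ} (d d' : Fin r → Fin N)
    (x y : R) (hx : x - ∑ m : Fin r, e (d m) * t ^ (m : ℕ) ∈ p ^ r)
    (hy : y - ∑ m : Fin r, e (d' m) * t ^ (m : ℕ) ∈ p ^ r)
    {s : ℕ} (hs : s ≤ r) :
    x - y ∈ p ^ s ↔ ∀ m : Fin r, (m : ℕ) < s → d m = d' m := by
  classical
  have hpow : p ^ r ≤ p ^ s := Ideal.pow_le_pow_right hs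
  have hsum : ∑ m : Fin r, (e (d m) - e (d' m)) * t ^ (m : ℕ)
      = (∑ m : Fin r, e (d m) * t ^ (m : ℕ)) - ∑ m : Fin r, e (d' m) * t ^ (m : ℕ) := by
    rw [← Finset.sum_sub_distrib]
    exact Finset.sum_congr rfl fun m _ => by ring
  have hD : x - y - ∑ m : Fin r, (e (d m) - e (d' m)) * t ^ (m : ℕ)
      = (x - ∑ m : Fin r, e (d m) * t ^ (m : ℕ))
        - (y - ∑ m : Fin r, e (d' m) * t ^ (m : ℕ)) := by
    rw [hsum]; ring
  have hDiff : (x - ∑ m : Fin r, e (d m) * t ^ (m : ℕ))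
        - (y - ∑ m : Fin r, e (d' m) * t ^ (m : ℕ)) ∈ p ^ s :=
    hpow (sub_mem hx hy)
  have hequiv : x - y ∈ p ^ s ↔
      (∑ m : Fin r, (e (d m) - e (d' m)) * t ^ (m : ℕ)) ∈ p ^ s := by
    constructor
    · intro h
      have := sub_mem h (hD ▸ hDiff)
      simpa using this
    · intro h
      have := add_mem (hD ▸ hDiff) h
      simpa using this
  rw [hequiv]
  constructor
  · -- hard direction: sum in p^s implies digits agree
    have key : ∀ s' : ℕ, s' ≤ r →
        (∑ m : Fin r, (e (d m) - e (d' m)) * t ^ (m : ℕ)) ∈ p ^ s' →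
        ∀ m : Fin r, (m : ℕ) < s' → d m = d' m := by
      intro s'
      induction s' with
      | zero => intro _ _ m hm; omega
      | succ s' ih =>
        intro hsr hDm m hm
        have hagree : ∀ m : Fin r, (m : ℕ) < s' → d m = d' m :=
          ih (Nat.le_of_succ_le hsr) (Ideal.pow_le_pow_right (Nat.le_succ s') hDm)
        rcases Nat.lt_or_ge (m : ℕ) s' with hlt | hge
        · exact hagree m hlt
        have hms : (m : ℕ) = s' := by omega
        by_contra hne
        have hc : e (d m) - e (d' m) ∉ p := fun hmem => hne (BFF.e_inj he hmem)
        have hrest : ∑ m' ∈ Finset.univ.erase m,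
            (e (d m') - e (d' m')) * t ^ (m' : ℕ) ∈ p ^ (s' + 1) := by
          apply Submodule.sum_mem
          intro m' hm'
          rcases Nat.lt_or_ge (m' : ℕ) s' with h' | h'
          · rw [hagree m' h', sub_self, zero_mul]
            exact zero_mem _
          · have hgt : s' + 1 ≤ (m' : ℕ) := by
              have : (m' : ℕ) ≠ s' := fun hh =>
                (Finset.mem_erase.mp hm').1 (Fin.ext (hh.trans hms.symm))
              omega
            exact Ideal.mul_mem_left _ _
              (Ideal.pow_le_pow_right hgt (Ideal.pow_mem_pow ht _))
        have hterm : (e (d m) - e (d' m)) * t ^ (m : ℕ) ∈ p ^ (s' + 1) := by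
          have hsplit : (e (d m) - e (d' m)) * t ^ (m : ℕ)
              = (∑ m'' : Fin r, (e (d m'') - e (d' m'')) * t ^ (m'' : ℕ))
                - ∑ m' ∈ Finset.univ.erase m, (e (d m') - e (d' m')) * t ^ (m' : ℕ) := by
            rw [← Finset.add_sum_erase _ _ (Finset.mem_univ m)]
            ring
          rw [hsplit]
          exact sub_mem hDm hrest
        have : t ^ (m : ℕ) ∈ p ^ (s' + 1) :=
          BFF.mem_pow_of_mul_mem hp hp0 hc hterm
        rw [hms] at this
        exact BFF.pow_not_mem hp hp0 ht ht2 s' this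
    exact key s hs
  · -- easy direction
    intro hagree
    apply Submodule.sum_mem
    intro m _
    rcases Nat.lt_or_ge (m : ℕ) s with hlt | hge
    · rw [hagree m hlt, sub_self, zero_mul]
      exact zero_mem _
    · exact Ideal.mul_mem_left _ _
        (Ideal.pow_le_pow_right hge (Ideal.pow_mem_pow ht _))



end BFFAux

/-- Berger–Felzenbaum–Fraenkel correspondence in a number field: with
`I = ⨅ I_i = ∏ 𝔭_j ^ r_j` and `f : 𝓞 K / I → P(n; b)` the digit-expansion
bijection (its defining property is hypothesis `hf`), the image under `f` of
the set of classes mod `I` contained in `α_i + I_i` is a cell; the family is an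
exact covering system iff these images form a cell partition; and `I_i ∣ I_t`
iff the index of the `i`-th cell contains the index of the `t`-th cell. -/
theorem cover_to_cell_partition {K : Type*} [Field K] [NumberField K]
    {k l : ℕ} (α : Fin k → 𝓞 K) (I : Fin k → Ideal (𝓞 K))
    (hbot : ∀ i, I i ≠ ⊥) (htop : ∀ i, I i ≠ ⊤)
    (𝔭 : Fin l → Ideal (𝓞 K)) (hprime : ∀ j, (𝔭 j).IsPrime)
    (hpbot : ∀ j, 𝔭 j ≠ ⊥) (hpinj : Function.Injective 𝔭)
    (r : Fin l → ℕ) (hr : ∀ j, 0 < r j)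
    (hI : (⨅ i, I i) = ∏ j, 𝔭 j ^ r j)
    (t : Fin l → 𝓞 K) (ht : ∀ j, t j ∈ 𝔭 j) (ht2 : ∀ j, t j ∉ 𝔭 j ^ 2)
    (e : ∀ j : Fin l, Fin ((𝔭 j).absNorm) → 𝓞 K)
    (he : ∀ j, ∀ x : 𝓞 K, ∃! m : Fin ((𝔭 j).absNorm), x - e j m ∈ 𝔭 j)
    (f : (𝓞 K ⧸ (∏ j, 𝔭 j ^ r j : Ideal (𝓞 K))) →
      ∀ j : Fin l, Fin (r j) → Fin ((𝔭 j).absNorm))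
    (hf : ∀ x : 𝓞 K, ∀ j : Fin l,
      x - ∑ m : Fin (r j),
        e j (f (Ideal.Quotient.mk (∏ j, 𝔭 j ^ r j : Ideal (𝓞 K)) x) j m) *
          t j ^ (m : ℕ) ∈ 𝔭 j ^ (r j : ℕ)) :
    Function.Bijective f ∧
    ∃ (T : Fin k → Finset (Σ j : Fin l, Fin (r j)))
      (u : Fin k → ∀ j : Fin l, Fin (r j) → Fin ((𝔭 j).absNorm)),
      (∀ i : Fin k,
        f '' {c | ∃ x : 𝓞 K,
            Ideal.Quotient.mk (∏ j, 𝔭 j ^ r j : Ideal (𝓞 K)) x = c ∧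
              x - α i ∈ I i} =
          {p | ∀ (j : Fin l) (m : Fin (r j)),
            (⟨j, m⟩ : Σ j : Fin l, Fin (r j)) ∉ T i → p j m = u i j m}) ∧
      ((∀ x : 𝓞 K, ∃! i : Fin k, x - α i ∈ I i) ↔
        (∀ p : ∀ j : Fin l, Fin (r j) → Fin ((𝔭 j).absNorm), ∃! i : Fin k,
          p ∈ f '' {c | ∃ x : 𝓞 K,
            Ideal.Quotient.mk (∏ j, 𝔭 j ^ r j : Ideal (𝓞 K)) x = c ∧
              x - α i ∈ I i})) ∧
      (∀ i i' : Fin k, I i ∣ I i' ↔ T i' ⊆ T i) := by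
  classical
  -- key digit characterization
  have key : ∀ (x y : 𝓞 K) (j : Fin l) (s : ℕ), s ≤ r j →
      (x - y ∈ 𝔭 j ^ s ↔ ∀ m : Fin (r j), (m : ℕ) < s →
        f (Ideal.Quotient.mk (∏ j, 𝔭 j ^ r j : Ideal (𝓞 K)) x) j m = f (Ideal.Quotient.mk (∏ j, 𝔭 j ^ r j : Ideal (𝓞 K)) y) j m) := by
    intro x y j s hs
    exact BFF.digits_agree_iff (hprime j) (hpbot j) (ht j) (ht2 j) (he j)
      (fun m => f (Ideal.Quotient.mk (∏ j, 𝔭 j ^ r j : Ideal (𝓞 K)) x) j m) (fun m => f (Ideal.Quotient.mk (∏ j, 𝔭 j ^ r j : Ideal (𝓞 K)) y) j m)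
      x y (hf x j) (hf y j) hs
  have memP : ∀ z : 𝓞 K, z ∈ (∏ j, 𝔭 j ^ r j : Ideal (𝓞 K)) ↔ ∀ j, z ∈ 𝔭 j ^ r j := by
    intro z
    rw [BFF.mem_prod_iff 𝔭 hprime hpbot hpinj r Finset.univ z]
    exact ⟨fun h j => h j (Finset.mem_univ j), fun h j _ => h j⟩
  -- injectivity
  have hinj : Function.Injective f := by
    intro c c' hcc
    obtain ⟨x, rfl⟩ := Ideal.Quotient.mk_surjective c
    obtain ⟨y, rfl⟩ := Ideal.Quotient.mk_surjective c'
    rw [Ideal.Quotient.eq]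
    rw [memP]
    intro j
    rw [key x y j (r j) le_rfl]
    intro m _
    rw [hcc]
  -- surjectivity via cardinality
  have hPbot : (∏ j, 𝔭 j ^ r j : Ideal (𝓞 K)) ≠ ⊥ := by
    rw [← Ideal.zero_eq_bot]
    apply Finset.prod_ne_zero_iff.mpr
    intro j _
    apply pow_ne_zero
    rw [Ideal.zero_eq_bot]
    exact hpbot j
  haveI : Fintype (𝓞 K ⧸ (∏ j, 𝔭 j ^ r j : Ideal (𝓞 K))) := @Fintype.ofFinite _ (Ideal.finiteQuotientOfFreeOfNeBot _ hPbot)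
  have hcard : Fintype.card (𝓞 K ⧸ (∏ j, 𝔭 j ^ r j : Ideal (𝓞 K)))
      = Fintype.card (∀ j : Fin l, Fin (r j) → Fin ((𝔭 j).absNorm)) := by
    rw [← Nat.card_eq_fintype_card]
    have h1 : Nat.card (𝓞 K ⧸ (∏ j, 𝔭 j ^ r j : Ideal (𝓞 K)))
        = Ideal.absNorm (∏ j, 𝔭 j ^ r j : Ideal (𝓞 K)) := by
      rw [Ideal.absNorm_apply, Submodule.cardQuot_apply]
    rw [h1, map_prod]
    simp only [map_pow]
    rw [Fintype.card_pi]
    congr 1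
    funext j
    rw [Fintype.card_fun, Fintype.card_fin, Fintype.card_fin]
  have hbij : Function.Bijective f :=
    (Fintype.bijective_iff_injective_and_card f).mpr ⟨hinj, hcard⟩
  refine ⟨hbij, ?_⟩
  have hIdvd : ∀ i, I i ∣ ∏ j, 𝔭 j ^ r j := by
    intro i
    rw [Ideal.dvd_iff_le, ← hI]
    exact iInf_le _ i
  choose s hs1 hs2 using fun i =>
    BFF.dvd_prod_pow 𝔭 hprime hpbot hpinj r Finset.univ (I i) (hIdvd i)
  have hmemI : ∀ i (z : 𝓞 K), z ∈ I i ↔ ∀ j, z ∈ 𝔭 j ^ s i j := by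
    intro i z
    rw [hs2 i, BFF.mem_prod_iff 𝔭 hprime hpbot hpinj (s i) Finset.univ z]
    exact ⟨fun h j => h j (Finset.mem_univ j), fun h j _ => h j⟩
  have hmemdig : ∀ i (x : 𝓞 K), x - α i ∈ I i ↔
      ∀ (j : Fin l) (m : Fin (r j)), (m : ℕ) < s i j →
        f (Ideal.Quotient.mk (∏ j, 𝔭 j ^ r j : Ideal (𝓞 K)) x) j m = f (Ideal.Quotient.mk (∏ j, 𝔭 j ^ r j : Ideal (𝓞 K)) (α i)) j m := by
    intro i x
    rw [hmemI i]
    constructor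
    · intro h j m hm
      exact (key x (α i) j (s i j) (hs1 i j)).mp (h j) m hm
    · intro h j
      exact (key x (α i) j (s i j) (hs1 i j)).mpr (fun m hm => h j m hm)
  have hcell : ∀ i : Fin k,
      f '' {c | ∃ x : 𝓞 K, Ideal.Quotient.mk (∏ j, 𝔭 j ^ r j : Ideal (𝓞 K)) x = c ∧ x - α i ∈ I i} =
      {p | ∀ (j : Fin l) (m : Fin (r j)),
        (⟨j, m⟩ : Σ j : Fin l, Fin (r j)) ∉ Finset.univ.filter
            (fun q : Σ j : Fin l, Fin (r j) => s i q.1 ≤ (q.2 : ℕ)) →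
          p j m = f (Ideal.Quotient.mk (∏ j, 𝔭 j ^ r j : Ideal (𝓞 K)) (α i)) j m} := by
    intro i
    ext p
    simp only [Set.mem_image, Set.mem_setOf_eq, Finset.mem_filter, Finset.mem_univ,
      true_and, not_le]
    constructor
    · rintro ⟨c, ⟨x, rfl, hx⟩, rfl⟩ j m hm
      exact (hmemdig i x).mp hx j m hm
    · intro hp
      obtain ⟨c, rfl⟩ := hbij.2 p
      obtain ⟨x, rfl⟩ := Ideal.Quotient.mk_surjective c
      exact ⟨Ideal.Quotient.mk (∏ j, 𝔭 j ^ r j : Ideal (𝓞 K)) x, ⟨x, rfl, (hmemdig i x).mpr (fun j m hm => hp j m hm)⟩, rfl⟩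
  have hbridge : ∀ (x : 𝓞 K) (i : Fin k),
      f (Ideal.Quotient.mk (∏ j, 𝔭 j ^ r j : Ideal (𝓞 K)) x) ∈ f '' {c | ∃ y : 𝓞 K, Ideal.Quotient.mk (∏ j, 𝔭 j ^ r j : Ideal (𝓞 K)) y = c ∧ y - α i ∈ I i} ↔
        x - α i ∈ I i := by
    intro x i
    rw [hcell i]
    simp only [Set.mem_setOf_eq, Finset.mem_filter, Finset.mem_univ, true_and, not_le]
    exact (hmemdig i x).symm
  refine ⟨fun i => Finset.univ.filter
      (fun q : Σ j : Fin l, Fin (r j) => s i q.1 ≤ (q.2 : ℕ)),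
    fun i => f (Ideal.Quotient.mk (∏ j, 𝔭 j ^ r j : Ideal (𝓞 K)) (α i)), hcell, ?_, ?_⟩
  · constructor
    · intro hx p
      obtain ⟨c, rfl⟩ := hbij.2 p
      obtain ⟨x, rfl⟩ := Ideal.Quotient.mk_surjective c
      obtain ⟨i, hi, hiu⟩ := hx x
      exact ⟨i, (hbridge x i).mpr hi, fun i' hi' => hiu i' ((hbridge x i').mp hi')⟩
    · intro hp x
      obtain ⟨i, hi, hiu⟩ := hp (f (Ideal.Quotient.mk (∏ j, 𝔭 j ^ r j : Ideal (𝓞 K)) x))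
      exact ⟨i, (hbridge x i).mp hi, fun i' hi' => hiu i' ((hbridge x i').mpr hi')⟩
  · intro i i'
    constructor
    · intro hdvd
      have hle : ∀ j, s i j ≤ s i' j := by
        intro j
        apply BFF.le_exponent 𝔭 hprime hpbot hpinj (s i) (s i') ?_ j (ht j) (ht2 j)
        rw [← hs2 i, ← hs2 i']
        exact Ideal.le_of_dvd hdvd
      intro q hq
      simp only [Finset.mem_filter, Finset.mem_univ, true_and] at hq ⊢
      exact le_trans (hle q.1) hq
    · intro hsub
      have hle : ∀ j, s i j ≤ s i' j := by
        intro j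
        rcases Nat.lt_or_ge (s i' j) (r j) with hlt | hge
        · have hq : (⟨j, ⟨s i' j, hlt⟩⟩ : Σ j : Fin l, Fin (r j)) ∈
              Finset.univ.filter
                (fun q : Σ j : Fin l, Fin (r j) => s i' q.1 ≤ (q.2 : ℕ)) := by
            simp only [Finset.mem_filter, Finset.mem_univ, true_and]
            exact le_rfl
          have := hsub hq
          simp only [Finset.mem_filter, Finset.mem_univ, true_and] at this
          exact this
        · exact le_trans (hs1 i j) hge
      rw [Ideal.dvd_iff_le]
      intro z hz
      rw [hmemI] at hz ⊢
      intro j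
      exact Ideal.pow_le_pow_right (hle j) (hz j)
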